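/- Let (M, φ, ξ, η, g) be a non-Sasakian contact metric (κ,μ)-space and define φ₁ := (1/√(1−κ)) φh, φ₂ := (1/√(1−κ)) h, φ₃ := φ. Then (φ₁, φ₂, φ₃) is an almost bi-paracontact structure: φ₁φ₂ = −φ₂φ₁ = φ₃, φ₁² = φ₂² = I − η⊗ξ. -/

import Mathlib

/-- Let `(M, φ, ξ, η, g)` be a non-Sasakian contact metric
`(κ,μ)`-space and define `φ₁ := (1/√(1-κ)) φh`, `φ₂ := (1/√(1-κ)) h`, `φ₃ := φ`.
Then `(φ₁, φ₂, φ₃)` is an almost bi-paracontact structure: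
`φ₁φ₂ = -φ₂φ₁ = φ₃` and `φ₁² = φ₂² = I - η⊗ξ`.
(Pointwise algebraic statement, using the identities `h² = (κ-1)φ²`, `hφ = -φh`,
`hξ = 0`, `φξ = 0`, `φ² = -I + η⊗ξ`, `η∘φ = η∘h = 0`, which hold in any non-Sasakian
contact metric `(κ,μ)`-space.) -/
theorem standard_almost_biparacontact_structure
    {V : Type*} [AddCommGroup V] [Module ℝ V]
    (η : V →ₗ[ℝ] ℝ) (ξ : V) (φ h : V →ₗ[ℝ] V) (κ : ℝ)
    (hκ : κ < 1)
    (hηξ : η ξ = 1) (hφξ : φ ξ = 0) (hhξ : h ξ = 0)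
    (hηφ : ∀ X, η (φ X) = 0) (hηh : ∀ X, η (h X) = 0)
    (hsq : ∀ X, φ (φ X) = -X + η X • ξ)
    (hanti : ∀ X, h (φ X) = -φ (h X))
    (hh2 : ∀ X, h (h X) = (κ - 1) • φ (φ X)) :
    let φ₁ : V → V := fun X => (Real.sqrt (1 - κ))⁻¹ • φ (h X)
    let φ₂ : V → V := fun X => (Real.sqrt (1 - κ))⁻¹ • h X
    (∀ X, φ₁ (φ₂ X) = φ X) ∧
    (∀ X, φ₂ (φ₁ X) = -φ X) ∧
    (∀ X, φ₁ (φ₁ X) = X - η X • ξ) ∧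
    (∀ X, φ₂ (φ₂ X) = X - η X • ξ) := by
  intro φ₁ φ₂
  have hpos : (0:ℝ) < 1 - κ := by linarith
  have hs : (Real.sqrt (1 - κ))⁻¹ * (Real.sqrt (1 - κ))⁻¹ = (1 - κ)⁻¹ := by
    rw [← mul_inv, Real.mul_self_sqrt hpos.le]
  have hne : (1 - κ) ≠ 0 := hpos.ne'
  refine ⟨fun X => ?_, fun X => ?_, fun X => ?_, fun X => ?_⟩
  · show (Real.sqrt (1 - κ))⁻¹ • φ (h ((Real.sqrt (1 - κ))⁻¹ • h X)) = φ X
    rw [map_smul, map_smul, smul_smul, hs, hh2, hsq]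
    simp only [map_smul, map_add, map_neg, hφξ, smul_zero, add_zero]
    match_scalars
    field_simp
    ring
  · show (Real.sqrt (1 - κ))⁻¹ • h ((Real.sqrt (1 - κ))⁻¹ • φ (h X)) = -φ X
    rw [map_smul, smul_smul, hs, hanti, hh2, hsq]
    simp only [map_smul, map_add, map_neg, hφξ, smul_zero, add_zero]
    match_scalars
    field_simp
    ring
  · show (Real.sqrt (1 - κ))⁻¹ • φ (h ((Real.sqrt (1 - κ))⁻¹ • φ (h X))) = X - η X • ξ
    rw [map_smul, map_smul, smul_smul, hs, hanti, map_neg, hh2, hsq]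
    simp only [map_smul, hηφ, mul_zero, zero_smul, add_zero, hsq, neg_neg, smul_zero, hηξ, mul_one]
    match_scalars <;> field_simp [hηξ] <;> (try simp only [map_add, map_neg, map_smul, hηξ, smul_eq_mul]) <;> ring
  · show (Real.sqrt (1 - κ))⁻¹ • h ((Real.sqrt (1 - κ))⁻¹ • h X) = X - η X • ξ
    rw [map_smul, smul_smul, hs, hh2, hsq]
    match_scalars <;> field_simp [hηξ] <;> ring
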